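/- Let h ∈ (0,1) and set λ̄ := h^{1/3}/√3. Then for every λ ∈ (0, λ̄] and every r ∈ ℝ one has F_λ''(r) ≥ 3·h^{1/3} − 2 − h; equivalently, F_λ''(r) + a ≥ 0 for every a ≥ c₀ := 2 + h − 3·h^{1/3}. -/

import Mathlib

open Set Filter

private lemma glueD {f g k : ℝ → ℝ} {p d a b : ℝ} (hap : a < p) (hpb : p < b)
    (hg : HasDerivAt g d p) (hk : HasDerivAt k d p)
    (heg : ∀ x, a < x → x ≤ p → f x = g x)
    (hek : ∀ x, p ≤ x → x < b → f x = k x) : HasDerivAt f d p := by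
  have h1 : HasDerivWithinAt f d (Set.Ioc a p) p :=
    (hg.hasDerivWithinAt).congr (fun x hx => heg x hx.1 hx.2) (heg p hap le_rfl)
  have h2 : HasDerivWithinAt f d (Set.Ico p b) p :=
    (hk.hasDerivWithinAt).congr (fun x hx => hek x hx.1 hx.2) (hek p le_rfl hpb)
  refine (h1.union h2).hasDerivAt ?_
  have hsub : Set.Ioo a b ⊆ Set.Ioc a p ∪ Set.Ico p b := by
    intro x hx; rcases le_or_gt x p with hxp | hxp
    · exact Or.inl ⟨hx.1, hxp⟩
    · exact Or.inr ⟨hxp.le, hx.2⟩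
  exact Filter.mem_of_superset (Ioo_mem_nhds hap hpb) hsub

private lemma congrD {f : ℝ → ℝ} {d d' x : ℝ} (h : HasDerivAt f d x) (hd : d' = d) :
    HasDerivAt f d' x := hd ▸ h

/-- Convex singular part `F_{1,λ}` of the regularized Lennard--Jones potential. -/
noncomputable def F1reg (h l r : ℝ) : ℝ :=
  if r < 0 then -r^3/l + h/2 * r^2 + h*r
  else if r < 1 - l then -h * Real.log (1 - r)
  else -h * Real.log l + 3*h/2 - 2*h/l * (1 - r) + h/(2*l^2) * (1 - r)^2

/-- Non-convex regular part `F̄₂` of the regularized Lennard--Jones potential. -/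
noncomputable def F2reg (h r : ℝ) : ℝ :=
  if r < 1 then -r^3/3 - h*(r^2/2 + r)
  else -1/3 - 3*h/2 - (1 + 2*h)*(r - 1) - (2 + h)/2 * (r - 1)^2

/-- The regularized potential `F_λ = F_{1,λ} + F̄₂`. -/
noncomputable def Freg (h l r : ℝ) : ℝ := F1reg h l r + F2reg h r

noncomputable def D1F1 (h l r : ℝ) : ℝ :=
  if r < 0 then -3*r^2/l + h*r + h else if r < 1 - l then h/(1-r) else 2*h/l - h/l^2*(1-r)

noncomputable def D1F2 (h r : ℝ) : ℝ :=
  if r < 1 then -r^2 - h*(r+1) else -(1+2*h) - (2+h)*(r-1)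

noncomputable def D2F1 (h l r : ℝ) : ℝ :=
  if r < 0 then -6*r/l + h else if r < 1 - l then h/(1-r)^2 else h/l^2

noncomputable def D2F2 (h r : ℝ) : ℝ :=
  if r < 1 then -2*r - h else -(2+h)

section branches
variable (h l : ℝ)

private lemma hd_g1 (x : ℝ) :
    HasDerivAt (fun x : ℝ => -x^3/l + h/2 * x^2 + h*x) (-3*x^2/l + h*x + h) x := by
  have := ((((hasDerivAt_pow 3 x).div_const l).neg).add
    ((hasDerivAt_pow 2 x).const_mul (h/2))).add ((hasDerivAt_id x).const_mul h)
  convert this using 1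
  · rfl
  · rfl
  · funext y; simp only [Pi.add_apply, Pi.neg_apply, Pi.sub_apply, id]; push_cast; ring
  · push_cast; ring

private lemma hd_g2 {x : ℝ} (hx : x < 1) :
    HasDerivAt (fun x : ℝ => -h * Real.log (1 - x)) (h/(1-x)) x := by
  have h1 : HasDerivAt (fun x : ℝ => 1 - x) (-1) x := by
    exact ((hasDerivAt_const x (1:ℝ)).sub (hasDerivAt_id x)).congr_deriv (by simp)
  have h2 := (Real.hasDerivAt_log (by linarith : (1:ℝ) - x ≠ 0)).comp x h1
  have := h2.const_mul (-h)
  convert this using 1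
  · rfl
  · rfl
  · rfl
  field_simp

private lemma hd_g3 {x : ℝ} (hl : l ≠ 0) :
    HasDerivAt (fun x : ℝ => -h * Real.log l + 3*h/2 - 2*h/l * (1 - x) + h/(2*l^2) * (1 - x)^2)
      (2*h/l - h/l^2*(1-x)) x := by
  have h1 : HasDerivAt (fun x : ℝ => 1 - x) (-1) x := by
    exact ((hasDerivAt_const x (1:ℝ)).sub (hasDerivAt_id x)).congr_deriv (by simp)
  have h2 : HasDerivAt (fun x : ℝ => (1-x)^2) (2*(1-x)*(-1)) x := by
    exact (h1.pow 2).congr_deriv (by simp)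
  have := (((hasDerivAt_const x (-h * Real.log l + 3*h/2)).sub (h1.const_mul (2*h/l)))).add
    (h2.const_mul (h/(2*l^2)))
  convert this using 1
  · rfl
  · rfl
  · rfl
  field_simp; ring

private lemma hd_f1 (x : ℝ) :
    HasDerivAt (fun x : ℝ => -x^3/3 - h*(x^2/2 + x)) (-x^2 - h*(x+1)) x := by
  have := (((hasDerivAt_pow 3 x).div_const 3).neg).sub
    ((((hasDerivAt_pow 2 x).div_const 2).add (hasDerivAt_id x)).const_mul h)
  convert this using 1
  · rfl
  · rfl
  · funext y; simp only [Pi.add_apply, Pi.neg_apply, Pi.sub_apply, id]; push_cast; ring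
  · push_cast; ring

private lemma hd_f2 (x : ℝ) :
    HasDerivAt (fun x : ℝ => -1/3 - 3*h/2 - (1 + 2*h)*(x - 1) - (2 + h)/2 * (x - 1)^2)
      (-(1+2*h) - (2+h)*(x-1)) x := by
  have h1 : HasDerivAt (fun x : ℝ => x - 1) 1 x := by
    exact ((hasDerivAt_id x).sub (hasDerivAt_const x (1:ℝ))).congr_deriv (by simp)
  have h2 : HasDerivAt (fun x : ℝ => (x-1)^2) (2*(x-1)*1) x := by
    exact (h1.pow 2).congr_deriv (by simp)
  have := (((hasDerivAt_const x (-1/3 - 3*h/2)).sub (h1.const_mul (1+2*h))).sub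
    (h2.const_mul ((2+h)/2)))
  convert this using 1
  · rfl
  · rfl
  · rfl
  ring

private lemma hd_b1 (x : ℝ) :
    HasDerivAt (fun x : ℝ => -3*x^2/l + h*x + h) (-6*x/l + h) x := by
  have := ((((hasDerivAt_pow 2 x).const_mul (-3)).div_const l).add
    ((hasDerivAt_id x).const_mul h)).add_const h
  convert this using 1
  · rfl
  · rfl
  · rfl
  push_cast; ring

private lemma hd_b2 {x : ℝ} (hx : x < 1) :
    HasDerivAt (fun x : ℝ => h/(1-x)) (h/(1-x)^2) x := by
  have h1 : HasDerivAt (fun x : ℝ => 1 - x) (-1) x := by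
    exact ((hasDerivAt_const x (1:ℝ)).sub (hasDerivAt_id x)).congr_deriv (by simp)
  have := (hasDerivAt_const x h).div h1 (by linarith : (1:ℝ) - x ≠ 0)
  convert this using 1
  · rfl
  · rfl
  · rfl
  field_simp; ring

private lemma hd_b3 (x : ℝ) :
    HasDerivAt (fun x : ℝ => 2*h/l - h/l^2*(1-x)) (h/l^2) x := by
  have h1 : HasDerivAt (fun x : ℝ => 1 - x) (-1) x := by
    exact ((hasDerivAt_const x (1:ℝ)).sub (hasDerivAt_id x)).congr_deriv (by simp)
  have := (hasDerivAt_const x (2*h/l)).sub (h1.const_mul (h/l^2))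
  convert this using 1
  · rfl
  · rfl
  · rfl
  ring

private lemma hd_c1 (x : ℝ) :
    HasDerivAt (fun x : ℝ => -x^2 - h*(x+1)) (-2*x - h) x := by
  have := ((hasDerivAt_pow 2 x).neg).sub (((hasDerivAt_id x).add_const (1:ℝ)).const_mul h)
  convert this using 1
  · rfl
  · rfl
  · rfl
  push_cast; ring

private lemma hd_c2 (x : ℝ) :
    HasDerivAt (fun x : ℝ => -(1+2*h) - (2+h)*(x-1)) (-(2+h)) x := by
  have h1 : HasDerivAt (fun x : ℝ => x - 1) 1 x := by
    exact ((hasDerivAt_id x).sub (hasDerivAt_const x (1:ℝ))).congr_deriv (by simp)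
  have := (hasDerivAt_const x (-(1+2*h))).sub (h1.const_mul (2+h))
  convert this using 1
  · rfl
  · rfl
  · rfl
  ring

end branches

section glue
variable {h l : ℝ}

private lemma hasDerivAt_F1reg (hl : 0 < l) (hl1 : l < 1) (r : ℝ) :
    HasDerivAt (F1reg h l) (D1F1 h l r) r := by
  have hll : (0:ℝ) < 1 - l := by linarith
  rcases lt_trichotomy r 0 with hr | hr | hr
  · simp only [D1F1, if_pos hr]
    refine glueD (show r - 1 < r by linarith) hr (hd_g1 h l r) (hd_g1 h l r) ?_ ?_
    · intro x _ hx2; simp only [F1reg, if_pos (show x < 0 by linarith)]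
    · intro x _ hx2; simp only [F1reg, if_pos hx2]
  · subst hr
    simp only [D1F1, lt_irrefl, if_neg (lt_irrefl (0:ℝ)), if_pos hll]
    refine glueD (show (-1:ℝ) < 0 by norm_num) hll
      (congrD (hd_g1 h l 0) (by norm_num)) (hd_g2 h (by norm_num)) ?_ ?_
    · intro x _ hx2
      rcases hx2.lt_or_eq with hx | hx
      · simp only [F1reg, if_pos hx]
      · subst hx
        simp only [F1reg, if_neg (lt_irrefl (0:ℝ)), if_pos hll]
        norm_num
    · intro x hx1 hx2
      simp only [F1reg, if_neg (not_lt.2 hx1), if_pos hx2]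
  · rcases lt_trichotomy r (1 - l) with hr2 | hr2 | hr2
    · simp only [D1F1, if_neg (not_lt.2 hr.le), if_pos hr2]
      refine glueD hr hr2 (hd_g2 h (by linarith)) (hd_g2 h (by linarith)) ?_ ?_
      · intro x hx1 hx2
        simp only [F1reg, if_neg (not_lt.2 hx1.le), if_pos (show x < 1 - l by linarith)]
      · intro x hx1 hx2
        simp only [F1reg, if_neg (not_lt.2 (by linarith : (0:ℝ) ≤ x)), if_pos hx2]
    · subst hr2
      simp only [D1F1, if_neg (not_lt.2 hll.le), lt_irrefl, if_neg (lt_irrefl (1-l))]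
      refine glueD hr (show 1 - l < 1 - l + 1 by linarith)
        (congrD (hd_g2 h (by linarith)) ?_) (hd_g3 h l hl.ne') ?_ ?_
      · rw [show (1:ℝ) - (1 - l) = l by ring]; field_simp; simp only [if_false]
        rw [mul_comm, div_mul_cancel₀ _ hl.ne']; ring
      · intro x hx1 hx2
        rcases hx2.lt_or_eq with hx | hx
        · simp only [F1reg, if_neg (not_lt.2 hx1.le), if_pos hx]
        · subst hx
          simp only [F1reg, if_neg (not_lt.2 hll.le), if_neg (lt_irrefl (1-l)),
            show (1:ℝ) - (1 - l) = l by ring]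
          field_simp; ring
      · intro x hx1 _
        simp only [F1reg, if_neg (not_lt.2 (by linarith : (0:ℝ) ≤ x)), if_neg (not_lt.2 hx1)]
    · simp only [D1F1, if_neg (not_lt.2 hr.le), if_neg (not_lt.2 hr2.le)]
      refine glueD hr2 (show r < r + 1 by linarith) (hd_g3 h l hl.ne') (hd_g3 h l hl.ne') ?_ ?_
      · intro x hx1 _
        simp only [F1reg, if_neg (not_lt.2 (by linarith : (0:ℝ) ≤ x)), if_neg (not_lt.2 hx1.le)]
      · intro x hx1 _
        simp only [F1reg, if_neg (not_lt.2 (by linarith : (0:ℝ) ≤ x)),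
          if_neg (not_lt.2 (by linarith : 1 - l ≤ x))]

private lemma hasDerivAt_F2reg (r : ℝ) : HasDerivAt (F2reg h) (D1F2 h r) r := by
  rcases lt_trichotomy r 1 with hr | hr | hr
  · simp only [D1F2, if_pos hr]
    refine glueD (show r - 1 < r by linarith) hr (hd_f1 h r) (hd_f1 h r) ?_ ?_
    · intro x _ hx2; simp only [F2reg, if_pos (show x < 1 by linarith)]
    · intro x _ hx2; simp only [F2reg, if_pos hx2]
  · subst hr
    simp only [D1F2, lt_irrefl, if_neg (lt_irrefl (1:ℝ))]
    refine glueD (show (0:ℝ) < 1 by norm_num) (show (1:ℝ) < 2 by norm_num)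
      (congrD (hd_f1 h 1) (by simp; ring)) (hd_f2 h 1) ?_ ?_
    · intro x _ hx2
      rcases hx2.lt_or_eq with hx | hx
      · simp only [F2reg, if_pos hx]
      · subst hx
        simp only [F2reg, if_neg (lt_irrefl (1:ℝ))]
        ring
    · intro x hx1 _
      simp only [F2reg, if_neg (not_lt.2 hx1)]
  · simp only [D1F2, if_neg (not_lt.2 hr.le)]
    refine glueD hr (show r < r + 1 by linarith) (hd_f2 h r) (hd_f2 h r) ?_ ?_
    · intro x hx1 _; simp only [F2reg, if_neg (not_lt.2 hx1.le)]
    · intro x hx1 _; simp only [F2reg, if_neg (not_lt.2 (by linarith : (1:ℝ) ≤ x))]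

private lemma hasDerivAt_D1F1 (hl : 0 < l) (hl1 : l < 1) (r : ℝ) :
    HasDerivAt (D1F1 h l) (D2F1 h l r) r := by
  have hll : (0:ℝ) < 1 - l := by linarith
  rcases lt_trichotomy r 0 with hr | hr | hr
  · simp only [D2F1, if_pos hr]
    refine glueD (show r - 1 < r by linarith) hr (hd_b1 h l r) (hd_b1 h l r) ?_ ?_
    · intro x _ hx2; simp only [D1F1, if_pos (show x < 0 by linarith)]
    · intro x _ hx2; simp only [D1F1, if_pos hx2]
  · subst hr
    simp only [D2F1, lt_irrefl, if_neg (lt_irrefl (0:ℝ)), if_pos hll]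
    refine glueD (show (-1:ℝ) < 0 by norm_num) hll
      (congrD (hd_b1 h l 0) (by norm_num)) (hd_b2 h (by norm_num)) ?_ ?_
    · intro x _ hx2
      rcases hx2.lt_or_eq with hx | hx
      · simp only [D1F1, if_pos hx]
      · subst hx
        simp only [D1F1, if_neg (lt_irrefl (0:ℝ)), if_pos hll]
        norm_num
    · intro x hx1 hx2
      simp only [D1F1, if_neg (not_lt.2 hx1), if_pos hx2]
  · rcases lt_trichotomy r (1 - l) with hr2 | hr2 | hr2
    · simp only [D2F1, if_neg (not_lt.2 hr.le), if_pos hr2]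
      refine glueD hr hr2 (hd_b2 h (by linarith)) (hd_b2 h (by linarith)) ?_ ?_
      · intro x hx1 hx2
        simp only [D1F1, if_neg (not_lt.2 hx1.le), if_pos (show x < 1 - l by linarith)]
      · intro x hx1 hx2
        simp only [D1F1, if_neg (not_lt.2 (by linarith : (0:ℝ) ≤ x)), if_pos hx2]
    · subst hr2
      simp only [D2F1, if_neg (not_lt.2 hll.le), lt_irrefl, if_neg (lt_irrefl (1-l))]
      refine glueD hr (show 1 - l < 1 - l + 1 by linarith)
        (congrD (hd_b2 h (by linarith)) ?_) (hd_b3 h l (1-l)) ?_ ?_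
      · simp [show (1:ℝ) - (1 - l) = l by ring]
      · intro x hx1 hx2
        rcases hx2.lt_or_eq with hx | hx
        · simp only [D1F1, if_neg (not_lt.2 hx1.le), if_pos hx]
        · subst hx
          simp only [D1F1, if_neg (not_lt.2 hll.le), if_neg (lt_irrefl (1-l)),
            show (1:ℝ) - (1 - l) = l by ring]
          field_simp; ring
      · intro x hx1 _
        simp only [D1F1, if_neg (not_lt.2 (by linarith : (0:ℝ) ≤ x)), if_neg (not_lt.2 hx1)]
    · simp only [D2F1, if_neg (not_lt.2 hr.le), if_neg (not_lt.2 hr2.le)]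
      refine glueD hr2 (show r < r + 1 by linarith) (hd_b3 h l r) (hd_b3 h l r) ?_ ?_
      · intro x hx1 _
        simp only [D1F1, if_neg (not_lt.2 (by linarith : (0:ℝ) ≤ x)), if_neg (not_lt.2 hx1.le)]
      · intro x hx1 _
        simp only [D1F1, if_neg (not_lt.2 (by linarith : (0:ℝ) ≤ x)),
          if_neg (not_lt.2 (by linarith : 1 - l ≤ x))]

private lemma hasDerivAt_D1F2 (r : ℝ) : HasDerivAt (D1F2 h) (D2F2 h r) r := by
  rcases lt_trichotomy r 1 with hr | hr | hr
  · simp only [D2F2, if_pos hr]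
    refine glueD (show r - 1 < r by linarith) hr (hd_c1 h r) (hd_c1 h r) ?_ ?_
    · intro x _ hx2; simp only [D1F2, if_pos (show x < 1 by linarith)]
    · intro x _ hx2; simp only [D1F2, if_pos hx2]
  · subst hr
    simp only [D2F2, lt_irrefl, if_neg (lt_irrefl (1:ℝ))]
    refine glueD (show (0:ℝ) < 1 by norm_num) (show (1:ℝ) < 2 by norm_num)
      (congrD (hd_c1 h 1) (by simp; ring)) (hd_c2 h 1) ?_ ?_
    · intro x _ hx2
      rcases hx2.lt_or_eq with hx | hx
      · simp only [D1F2, if_pos hx]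
      · subst hx
        simp only [D1F2, if_neg (lt_irrefl (1:ℝ))]
        ring
    · intro x hx1 _
      simp only [D1F2, if_neg (not_lt.2 hx1)]
  · simp only [D2F2, if_neg (not_lt.2 hr.le)]
    refine glueD hr (show r < r + 1 by linarith) (hd_c2 h r) (hd_c2 h r) ?_ ?_
    · intro x hx1 _; simp only [D1F2, if_neg (not_lt.2 hx1.le)]
    · intro x hx1 _; simp only [D1F2, if_neg (not_lt.2 (by linarith : (1:ℝ) ≤ x))]

private lemma deriv_deriv_Freg (hl : 0 < l) (hl1 : l < 1) (r : ℝ) :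
    deriv (deriv (Freg h l)) r = D2F1 h l r + D2F2 h r := by
  have h1 : deriv (Freg h l) = fun x => D1F1 h l x + D1F2 h x := by
    funext x
    exact ((hasDerivAt_F1reg hl hl1 x).add (hasDerivAt_F2reg x)).deriv
  rw [h1]
  exact ((hasDerivAt_D1F1 hl hl1 r).add (hasDerivAt_D1F2 r)).deriv

end glue
/-- With `λ̄ := h^{1/3}/√3`, for all `λ ∈ (0,λ̄]` and all `r ∈ ℝ` one has
`F_λ''(r) ≥ 3 h^{1/3} - 2 - h`; equivalently `F_λ''(r) + a ≥ 0` for all `a ≥ c₀`. -/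
theorem Freg_second_derivative_lower_bound (h : ℝ) (hh : h ∈ Set.Ioo (0:ℝ) 1) :
    ∀ l ∈ Set.Ioc (0:ℝ) (h ^ ((1:ℝ)/3) / Real.sqrt 3), ∀ r : ℝ,
      3 * h ^ ((1:ℝ)/3) - 2 - h ≤ deriv (deriv (Freg h l)) r ∧
      (∀ a : ℝ, 2 + h - 3 * h ^ ((1:ℝ)/3) ≤ a → 0 ≤ deriv (deriv (Freg h l)) r + a) := by
  obtain ⟨h0, h1⟩ := hh
  rintro l ⟨hl0, hlle⟩ r
  set t := h ^ ((1:ℝ)/3) with ht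
  have ht0 : 0 < t := Real.rpow_pos_of_pos h0 _
  have ht1 : t < 1 := Real.rpow_lt_one h0.le h1 (by norm_num)
  have hcube : t^3 = h := by
    rw [ht, ← Real.rpow_natCast (h ^ ((1:ℝ)/3)) 3, ← Real.rpow_mul h0.le]
    norm_num
  have hs3 : (0:ℝ) < Real.sqrt 3 := by positivity
  have hl1 : l < 1 := by
    have h2 : t / Real.sqrt 3 < 1 := by
      rw [div_lt_one hs3]
      have : (1:ℝ) ≤ Real.sqrt 3 := by
        rw [show (1:ℝ) = Real.sqrt 1 by simp]
        exact Real.sqrt_le_sqrt (by norm_num)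
      linarith
    linarith
  have hll2 : 3 * l^2 ≤ t^2 := by
    have h2 := mul_self_le_mul_self hl0.le hlle
    have hsq : (t / Real.sqrt 3) * (t / Real.sqrt 3) = t^2/3 := by
      rw [div_mul_div_comm, Real.mul_self_sqrt (by norm_num : (0:ℝ) ≤ 3)]
      ring
    nlinarith
  have hkey : deriv (deriv (Freg h l)) r = D2F1 h l r + D2F2 h r :=
    deriv_deriv_Freg hl0 hl1 r
  have h32 : 3*t ≤ 2 + h := by
    nlinarith [mul_nonneg (sq_nonneg (t-1)) (by linarith : (0:ℝ) ≤ t + 2)]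
  have h3l : 3*t ≤ h / l^2 := by
    rw [le_div_iff₀ (by positivity)]
    nlinarith
  have hbound : 3*t - 2 - h ≤ D2F1 h l r + D2F2 h r := by
    simp only [D2F1, D2F2]
    split_ifs with hA hB hC hD hE hF
    · have hrl : 0 ≤ -6*r/l := div_nonneg (by linarith) hl0.le
      linarith
    · linarith
    · have hs0 : (0:ℝ) < 1 - r := by linarith
      have key : 3*t - 2*(1-r) ≤ h/(1-r)^2 := by
        rw [le_div_iff₀ (by positivity)]
        nlinarith [mul_nonneg (sq_nonneg (t-(1-r))) (by linarith : (0:ℝ) ≤ t + 2*(1-r))]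
      linarith
    · linarith
    · linarith
    · linarith
  rw [hkey]
  exact ⟨hbound, fun a ha => by linarith⟩
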